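/- Converse direction of the objective-parametrized reduction: if the 3-SAT instance is satisfiable and x ∈ {0,1}^n encodes a satisfying assignment, then x ∈ X and (μ*, ν*, z*) = (x, 1 − x, 0) is the unique optimal solution of the LP: minimize −xᵀμ − (1−x)ᵀν − (n − 1/4)z subject to μ_i + ν_i + z ≤ 1, μ, ν, z ≥ 0. -/

import Mathlib

open Finset

/-- The value of a literal `(i, s)` under the relaxed assignment `x`. -/
noncomputable def litVal {n : ℕ} (x : Fin n → ℝ) (l : Fin n × Bool) : ℝ :=
  if l.2 then x l.1 else 1 - x l.1

/-- Converse direction of the objective-parametrized 3-SAT reduction: if `x ∈ {0,1}^n`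
encodes a satisfying assignment, then `x ∈ X` (all clause sums are ≥ 1) and
`(μ*, ν*, z*) = (x, 1 − x, 0)` is the unique optimal solution of the LP
`min −xᵀμ − (1−x)ᵀν − (n − 1/4)z  s.t.  μᵢ + νᵢ + z ≤ 1, μ, ν, z ≥ 0`. -/
theorem stmt_16 {n m : ℕ} (γ : Fin m → Fin 3 → Fin n × Bool)
    (x : Fin n → ℝ) (hbin : ∀ i, x i = 0 ∨ x i = 1)
    (hsat : ∀ j : Fin m, ∃ k : Fin 3,
      if (γ j k).2 then x (γ j k).1 = 1 else x (γ j k).1 = 0) :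
    ((∀ i, x i ∈ Set.Icc (0:ℝ) 1) ∧ ∀ j : Fin m, 1 ≤ ∑ k : Fin 3, litVal x (γ j k)) ∧
    ((∀ i, x i + (1 - x i) + 0 ≤ 1) ∧ (∀ i, 0 ≤ x i) ∧ (∀ i, 0 ≤ 1 - x i) ∧ (0:ℝ) ≤ 0) ∧
    (∀ (μ ν : Fin n → ℝ) (z : ℝ),
      (∀ i, μ i + ν i + z ≤ 1) → (∀ i, 0 ≤ μ i) → (∀ i, 0 ≤ ν i) → 0 ≤ z →
      (μ, ν, z) ≠ (x, fun i => 1 - x i, (0:ℝ)) →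
      -(∑ i, x i * x i) - (∑ i, (1 - x i) * (1 - x i)) - ((n : ℝ) - 1/4) * 0 <
        -(∑ i, x i * μ i) - (∑ i, (1 - x i) * ν i) - ((n : ℝ) - 1/4) * z) := by
  have h01 : ∀ i, 0 ≤ x i ∧ x i ≤ 1 := fun i => by rcases hbin i with h | h <;> simp [h]
  have hA : (∑ i, x i * x i) + (∑ i, (1 - x i) * (1 - x i)) = n := by
    rw [← Finset.sum_add_distrib]
    have : ∀ i ∈ Finset.univ, x i * x i + (1 - x i) * (1 - x i) = 1 := by
      intro i _; rcases hbin i with h | h <;> simp [h]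
    rw [Finset.sum_congr rfl this]
    simp
  refine ⟨⟨fun i => ⟨(h01 i).1, (h01 i).2⟩, fun j => ?_⟩,
    ⟨fun i => by linarith, fun i => (h01 i).1, fun i => by linarith [(h01 i).2], le_refl 0⟩,
    ?_⟩
  · obtain ⟨k, hk⟩ := hsat j
    have h1 : litVal x (γ j k) = 1 := by
      rcases Bool.eq_false_or_eq_true (γ j k).2 with h | h <;>
        simp [litVal, h] at hk ⊢ <;> simp [hk]
    have hnn : ∀ k' ∈ Finset.univ, 0 ≤ litVal x (γ j (k' : Fin 3)) := by
      intro k' _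
      unfold litVal
      split <;> [exact (h01 _).1; linarith [(h01 (γ j k').1).2]]
    calc (1:ℝ) = litVal x (γ j k) := h1.symm
      _ ≤ ∑ k : Fin 3, litVal x (γ j k) := Finset.single_le_sum hnn (Finset.mem_univ k)
  · intro μ ν z hcon hμ hν hz hne
    have hterm : ∀ i, x i * μ i + (1 - x i) * ν i ≤ 1 - z := by
      intro i
      rcases hbin i with h | h <;> simp [h] <;> linarith [hcon i, hμ i, hν i]
    have key : (∑ i, (x i * μ i + (1 - x i) * ν i)) + ((n : ℝ) - 1/4) * z < n := by
      rcases lt_or_eq_of_le hz with hzpos | hz0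
      · have hs : (∑ i, (x i * μ i + (1 - x i) * ν i)) ≤ (n : ℝ) * (1 - z) := by
          calc (∑ i, (x i * μ i + (1 - x i) * ν i)) ≤ ∑ _i : Fin n, (1 - z) :=
              Finset.sum_le_sum fun i _ => hterm i
            _ = (n : ℝ) * (1 - z) := by simp [Finset.sum_const, mul_comm]; ring
        nlinarith
      · subst hz0
        have hdiff : ∃ i, μ i ≠ x i ∨ ν i ≠ 1 - x i := by
          by_contra hc
          push_neg at hc
          exact hne (by
            simp only [Prod.mk.injEq]
            exact ⟨funext fun i => (hc i).1, funext fun i => (hc i).2, trivial⟩)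
        obtain ⟨i0, hi0⟩ := hdiff
        have hstrict : x i0 * μ i0 + (1 - x i0) * ν i0 < 1 := by
          have hc := hcon i0
          rcases hbin i0 with h | h <;> simp [h] at hi0 ⊢
          · rcases hi0 with h' | h'
            · have : 0 < μ i0 := lt_of_le_of_ne (hμ i0) (Ne.symm h')
              linarith [hν i0]
            · have : ν i0 < 1 := lt_of_le_of_ne (by linarith [hμ i0]) h'
              linarith
          · rcases hi0 with h' | h'
            · have : μ i0 < 1 := lt_of_le_of_ne (by linarith [hν i0]) h'
              linarith
            · have : 0 < ν i0 := lt_of_le_of_ne (hν i0) (Ne.symm h')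
              linarith [hμ i0]
        have hs : (∑ i, (x i * μ i + (1 - x i) * ν i)) < ∑ _i : Fin n, (1:ℝ) :=
          Finset.sum_lt_sum (fun i _ => by linarith [hterm i]) ⟨i0, Finset.mem_univ i0, by linarith⟩
        simp at hs
        linarith
    have hsplit : (∑ i, (x i * μ i + (1 - x i) * ν i)) =
        (∑ i, x i * μ i) + (∑ i, (1 - x i) * ν i) := Finset.sum_add_distrib
    linarith
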